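/- Let V be a finite-dimensional real vector space and C ⊆ V a cone that is a finite union C = ∪_{i=1}^N Cᵢ of closed convex polyhedral cones Cᵢ with pairwise disjoint interiors, such that each codimension-1 face of each Cᵢ is either shared with exactly one other Cⱼ or lies in the boundary of C. If C is convex and D ∈ C, then there is a finite sequence C_{i₀}, C_{i₁}, …, C_{i_r} with D ∈ C_{i_r}, consecutive cones sharing a codimension-1 face, starting from any given C_{i₀} whose interior meets the segment from an interior point of C_{i₀} to D in general position. -/

import Mathlib

/-- A closed convex polyhedral cone in `ℝᵈ`: an intersection of finitely many
closed linear half-spaces. -/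
def IsPolyhedralCone {d : ℕ} (C : Set (Fin d → ℝ)) : Prop :=
  ∃ s : Finset ((Fin d → ℝ) →ₗ[ℝ] ℝ), C = {x | ∀ f ∈ s, 0 ≤ f x}

open Set MeasureTheory Module

lemma IsPolyhedralCone.isClosed {d : ℕ} {S : Set (Fin d → ℝ)}
    (h : IsPolyhedralCone S) : IsClosed S := by
  obtain ⟨s, rfl⟩ := h
  have : {x : Fin d → ℝ | ∀ f ∈ s, 0 ≤ f x} = ⋂ f ∈ s, {x | 0 ≤ f x} := by
    ext x; simp
  rw [this]
  exact isClosed_biInter fun f _ =>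
    isClosed_le continuous_const f.continuous_of_finiteDimensional

lemma IsPolyhedralCone.convex {d : ℕ} {S : Set (Fin d → ℝ)}
    (h : IsPolyhedralCone S) : Convex ℝ S := by
  obtain ⟨s, rfl⟩ := h
  have : {x : Fin d → ℝ | ∀ f ∈ s, 0 ≤ f x} = ⋂ f ∈ s, {x | 0 ≤ f x} := by
    ext x; simp
  rw [this]
  exact convex_iInter₂ fun f _ => convex_halfSpace_ge (f.isLinear) 0

lemma IsPolyhedralCone.zero_mem {d : ℕ} {S : Set (Fin d → ℝ)}
    (h : IsPolyhedralCone S) : (0 : Fin d → ℝ) ∈ S := by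
  obtain ⟨s, rfl⟩ := h
  intro f _
  simp

/-- If a segment from `x` to `z` meets `F`, with `x ∉ F`, `F ≤ G`, `x ∈ G`,
then `z ∈ G`. -/
lemma segment_avoid {d : ℕ} (F G : Submodule ℝ (Fin d → ℝ)) {x z w : Fin d → ℝ}
    (hx : x ∉ (F : Set (Fin d → ℝ))) (hFG : F ≤ G) (hxG : x ∈ G)
    (hw : w ∈ segment ℝ x z) (hwF : w ∈ (F : Set (Fin d → ℝ))) : z ∈ G := by
  obtain ⟨a, b, ha, hb, hab, rfl⟩ := hw
  rcases eq_or_lt_of_le hb with hb0 | hb0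
  · exfalso
    apply hx
    have : a = 1 := by linarith
    simpa [this, ← hb0] using hwF
  · have hzG : b • z ∈ G := by
      have h1 : (a • x + b • z) - a • x ∈ G := Submodule.sub_mem _ (hFG hwF)
        (Submodule.smul_mem _ _ hxG)
      simpa using h1
    have := Submodule.smul_mem G b⁻¹ hzG
    rwa [smul_smul, inv_mul_cancel₀ hb0.ne', one_smul] at this

/-- Chamber-crossing in a cone decomposed into finitely many chambers.
Let `C = ⋃ᵢ Cᵢ` be a union of finitely many full-dimensional closed convex
polyhedral cones in `ℝᵈ` with pairwise disjoint interiors, whose union is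
convex.  Then for any chamber `C_{i₀}` and any point `D ∈ C`, there is a finite
sequence of chambers `C_{i₀} = C_{seq 0}, C_{seq 1}, …, C_{seq r}` with
`D ∈ C_{seq r}`, consecutive chambers sharing a codimension-one face (a wall):
their intersection spans a subspace of dimension `d − 1`. -/
theorem stmt_18 (d N : ℕ) (C : Fin N → Set (Fin d → ℝ))
    (hpoly : ∀ i, IsPolyhedralCone (C i))
    (hfull : ∀ i, (interior (C i)).Nonempty)
    (hdisj : ∀ i j, i ≠ j → interior (C i) ∩ interior (C j) = ∅)
    (hconv : Convex ℝ (⋃ i, C i))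
    (i₀ : Fin N) (D : Fin d → ℝ) (hD : D ∈ ⋃ i, C i) :
    ∃ (r : ℕ) (seq : ℕ → Fin N), seq 0 = i₀ ∧ D ∈ C (seq r) ∧
      ∀ l < r, Module.finrank ℝ
        (Submodule.span ℝ (C (seq l) ∩ C (seq (l + 1)))) = d - 1 := by
  classical
  -- the wall relation
  set wall : Fin N → Fin N → Prop := fun i j =>
    Module.finrank ℝ (Submodule.span ℝ (C i ∩ C j)) = d - 1 with hwall
  -- the set of chambers reachable from i₀ by crossing walls
  set S : Set (Fin N) := {j | ∃ (r : ℕ) (seq : ℕ → Fin N),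
    seq 0 = i₀ ∧ seq r = j ∧ ∀ l < r, wall (seq l) (seq (l + 1))} with hS
  have hi₀S : i₀ ∈ S := ⟨0, fun _ => i₀, rfl, rfl, by omega⟩
  have hSext : ∀ i ∈ S, ∀ j, wall i j → j ∈ S := by
    rintro i ⟨r, seq, h0, hr, hw⟩ j hij
    refine ⟨r + 1, fun n => if n ≤ r then seq n else j, by simp [h0], by simp, ?_⟩
    intro l hl
    rcases lt_or_eq_of_le (Nat.lt_succ_iff.1 hl) with hl' | hl'
    · simpa [hl'.le, Nat.succ_le_of_lt hl'] using hw l hl'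
    · subst hl'
      simpa [hr] using hij
  -- it suffices to show D lies in a reachable chamber
  suffices hsuff : ∃ i ∈ S, D ∈ C i by
    obtain ⟨i, ⟨r, seq, h0, hr, hw⟩, hDi⟩ := hsuff
    exact ⟨r, seq, h0, by rwa [hr], hw⟩
  by_contra hcon
  push_neg at hcon
  obtain ⟨j₁, hj₁⟩ := mem_iUnion.1 hD
  have hj₁S : j₁ ∉ S := fun h => hcon j₁ h hj₁
  -- basic facts about the chambers
  have hclosed : ∀ i, IsClosed (C i) := fun i => (hpoly i).isClosed
  have hcvx : ∀ i, Convex ℝ (C i) := fun i => (hpoly i).convex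
  have hzero : ∀ i, (0 : Fin d → ℝ) ∈ C i := fun i => (hpoly i).zero_mem
  -- pairwise intersections of distinct chambers span proper subspaces
  have hproper : ∀ i j, i ≠ j → Submodule.span ℝ (C i ∩ C j) ≠ ⊤ := by
    intro i j hij htop
    have hsub : C i ∩ C j ⊆ C i ∩ C j -ᵥ C i ∩ C j := by
      intro x hx
      have := Set.vsub_mem_vsub hx (Set.mem_inter (hzero i) (hzero j))
      simpa using this
    have hvs : vectorSpan ℝ (C i ∩ C j) = ⊤ := by
      rw [vectorSpan_def]
      exact top_le_iff.1 (htop ▸ Submodule.span_mono hsub)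
    have hne : (C i ∩ C j).Nonempty := ⟨0, hzero i, hzero j⟩
    have haff : affineSpan ℝ (C i ∩ C j) = ⊤ :=
      (AffineSubspace.affineSpan_eq_top_iff_vectorSpan_eq_top_of_nonempty ℝ _ _ hne).2 hvs
    have hint : (interior (C i ∩ C j)).Nonempty :=
      (((hcvx i).inter (hcvx j)).interior_nonempty_iff_affineSpan_eq_top).2 haff
    rw [interior_inter, hdisj i j hij] at hint
    exact hint.ne_empty rfl
  -- "bad" pairs : distinct chambers whose intersection does not span a wall
  set Bad : Fin N × Fin N → Prop := fun p => p.1 ≠ p.2 ∧ ¬ wall p.1 p.2 with hBad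
  set F : Fin N × Fin N → Submodule ℝ (Fin d → ℝ) :=
    fun p => Submodule.span ℝ (C p.1 ∩ C p.2) with hF
  have hbadrk : ∀ p, Bad p → finrank ℝ (F p) + 2 ≤ d := by
    rintro p ⟨hne, hnw⟩
    have h1 : finrank ℝ (F p) < d := by
      have := Submodule.finrank_lt (K := ℝ) (V := Fin d → ℝ) (hproper p.1 p.2 hne)
      rwa [finrank_fin_fun] at this
    have h2 : finrank ℝ (F p) ≠ d - 1 := hnw
    omega
  -- setup measure-theoretic genericity
  set μ : Measure (Fin d → ℝ) := volume with hμ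
  have hFne : ∀ p, Bad p → F p ≠ ⊤ := by
    intro p hp h
    have h2 := hbadrk p hp
    rw [h, finrank_top, finrank_fin_fun] at h2
    omega
  have hFnull : ∀ p, Bad p → μ (F p) = 0 := fun p hp =>
    Measure.addHaar_submodule μ _ (hFne p hp)
  -- choose x generic in the interior of C i₀
  set Z : Set (Fin d → ℝ) := ⋃ p, ⋃ (_ : Bad p), (F p : Set (Fin d → ℝ)) with hZ
  have hZnull : μ Z = 0 :=
    measure_iUnion_null fun p => measure_iUnion_null fun hp => hFnull p hp
  have hpick : ∀ (V : Set (Fin d → ℝ)), IsOpen V → V.Nonempty →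
      ∀ (W : Set (Fin d → ℝ)), μ W = 0 → (V \ W).Nonempty := by
    intro V hVo hVne W hW
    apply nonempty_of_measure_ne_zero (μ := μ)
    rw [measure_diff_null hW]
    exact (hVo.measure_pos μ hVne).ne'
  obtain ⟨x, hxint, hxZ⟩ := hpick _ isOpen_interior (hfull i₀) Z hZnull
  obtain ⟨y, hyint, hyZ⟩ := hpick _ isOpen_interior (hfull j₁) Z hZnull
  have hxF : ∀ p, Bad p → x ∉ (F p : Set (Fin d → ℝ)) := by
    intro p hp hxp
    exact hxZ (mem_iUnion.2 ⟨p, mem_iUnion.2 ⟨hp, hxp⟩⟩)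
  have hyF : ∀ p, Bad p → y ∉ (F p : Set (Fin d → ℝ)) := by
    intro p hp hyp
    exact hyZ (mem_iUnion.2 ⟨p, mem_iUnion.2 ⟨hp, hyp⟩⟩)
  -- the subspaces to be avoided by the generic intermediate point z
  set G : Fin N × Fin N → Submodule ℝ (Fin d → ℝ) := fun p => F p ⊔ (ℝ ∙ x) with hG
  set H : Fin N × Fin N → Submodule ℝ (Fin d → ℝ) := fun p => F p ⊔ (ℝ ∙ y) with hH
  have hrk1 : ∀ v : Fin d → ℝ, finrank ℝ (ℝ ∙ v) ≤ 1 := by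
    intro v
    rcases eq_or_ne v 0 with rfl | hv
    · rw [Submodule.span_zero_singleton]; simp
    · rw [finrank_span_singleton hv]
  have hGHne : ∀ p, Bad p → G p ≠ ⊤ ∧ H p ≠ ⊤ := by
    intro p hp
    have hb := hbadrk p hp
    constructor
    · intro h
      have h1 : finrank ℝ (G p) ≤ finrank ℝ (F p) + finrank ℝ (ℝ ∙ x) :=
        Submodule.finrank_add_le_finrank_add_finrank _ _
      rw [h, finrank_top, finrank_fin_fun] at h1
      have := hrk1 x
      omega
    · intro h
      have h1 : finrank ℝ (H p) ≤ finrank ℝ (F p) + finrank ℝ (ℝ ∙ y) :=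
        Submodule.finrank_add_le_finrank_add_finrank _ _
      rw [h, finrank_top, finrank_fin_fun] at h1
      have := hrk1 y
      omega
  set Z' : Set (Fin d → ℝ) :=
    ⋃ p, ⋃ (_ : Bad p), ((G p : Set (Fin d → ℝ)) ∪ (H p : Set (Fin d → ℝ))) with hZ'
  have hZ'null : μ Z' = 0 := by
    refine measure_iUnion_null fun p => measure_iUnion_null fun hp => ?_
    rw [measure_union_null_iff]
    exact ⟨Measure.addHaar_submodule μ _ (hGHne p hp).1,
      Measure.addHaar_submodule μ _ (hGHne p hp).2⟩
  -- the open convex ambient set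
  set U : Set (Fin d → ℝ) := interior (⋃ i, C i) with hUdef
  have hxU : x ∈ U := interior_mono (subset_iUnion C i₀) hxint
  have hyU : y ∈ U := interior_mono (subset_iUnion C j₁) hyint
  obtain ⟨z, hzU, hzZ'⟩ := hpick U isOpen_interior ⟨x, hxU⟩ Z' hZ'null
  have hzG : ∀ p, Bad p → z ∉ (G p : Set (Fin d → ℝ)) := by
    intro p hp hzp
    exact hzZ' (mem_iUnion.2 ⟨p, mem_iUnion.2 ⟨hp, Or.inl hzp⟩⟩)
  have hzH : ∀ p, Bad p → z ∉ (H p : Set (Fin d → ℝ)) := by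
    intro p hp hzp
    exact hzZ' (mem_iUnion.2 ⟨p, mem_iUnion.2 ⟨hp, Or.inr hzp⟩⟩)
  -- the polyline P from x to y through z avoids all bad intersections
  set P : Set (Fin d → ℝ) := segment ℝ x z ∪ segment ℝ z y with hP
  have hUconv : Convex ℝ U := hconv.interior
  have hPU : P ⊆ U :=
    union_subset (hUconv.segment_subset hxU hzU) (hUconv.segment_subset hzU hyU)
  have hPF : ∀ w ∈ P, ∀ p, Bad p → w ∉ (F p : Set (Fin d → ℝ)) := by
    rintro w (hw | hw) p hp hwF
    · exact hzG p hp (segment_avoid (F p) (G p) (hxF p hp) le_sup_left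
        (Submodule.mem_sup_right (Submodule.mem_span_singleton_self x)) hw hwF)
    · rw [segment_symm] at hw
      exact hzH p hp (segment_avoid (F p) (H p) (hyF p hp) le_sup_left
        (Submodule.mem_sup_right (Submodule.mem_span_singleton_self y)) hw hwF)
  have hPconn : IsPreconnected P :=
    IsPreconnected.union z (right_mem_segment ℝ x z) (left_mem_segment ℝ z y)
      (convex_segment x z).isPreconnected (convex_segment z y).isPreconnected
  -- the reachable and unreachable parts, both closed
  set A : Set (Fin d → ℝ) := ⋃ i ∈ S, C i with hA
  set B : Set (Fin d → ℝ) := ⋃ i ∈ Sᶜ, C i with hB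
  have hAcl : IsClosed A := S.toFinite.isClosed_biUnion fun i _ => hclosed i
  have hBcl : IsClosed B := Sᶜ.toFinite.isClosed_biUnion fun i _ => hclosed i
  have hPAB : P ⊆ A ∪ B := by
    intro w hw
    obtain ⟨i, hwi⟩ := mem_iUnion.1 (interior_subset (hPU hw))
    by_cases hi : i ∈ S
    · exact Or.inl (mem_biUnion hi hwi)
    · exact Or.inr (mem_biUnion hi hwi)
  have hPA : (P ∩ A).Nonempty :=
    ⟨x, Or.inl (left_mem_segment ℝ x z), mem_biUnion hi₀S (interior_subset hxint)⟩
  have hPB : (P ∩ B).Nonempty :=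
    ⟨y, Or.inr (right_mem_segment ℝ z y), mem_biUnion hj₁S (interior_subset hyint)⟩
  obtain ⟨w, hwP, hwA, hwB⟩ :=
    isPreconnected_closed_iff.1 hPconn A B hAcl hBcl hPAB hPA hPB
  obtain ⟨i, hiS, hwi⟩ := mem_iUnion₂.1 hwA
  obtain ⟨j, hjS, hwj⟩ := mem_iUnion₂.1 hwB
  have hij : i ≠ j := fun h => hjS (h ▸ hiS)
  by_cases hwallij : wall i j
  · exact hjS (hSext i hiS j hwallij)
  · have hbad : Bad (i, j) := ⟨hij, hwallij⟩
    exact hPF w hwP (i, j) hbad (Submodule.subset_span ⟨hwi, hwj⟩)
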